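/- Under the same hypotheses (S symmetric solving S = A_F S A_F' + C_F S C_F' + [I;F] Z [I;F]'), the full matrix S satisfies S = [I;F] S₁₁ [I;F]', where S₁₁ is its upper-left n×n block. -/

import Mathlib

open Matrix

lemma key_fact {n m : ℕ} (F : Matrix (Fin m) (Fin n) ℝ) (M : Matrix (Fin n) (Fin n) ℝ) :
    (fromRows (1 : Matrix (Fin n) (Fin n) ℝ) F * M * (fromRows 1 F)ᵀ).toBlocks₁₁ = M := by
  rw [transpose_fromRows, fromRows_mul, fromRows_mul_fromCols, toBlocks_fromBlocks₁₁,
    one_mul, transpose_one, Matrix.mul_one]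

theorem stmt_2 {n m : ℕ}
    (A C : Matrix (Fin n) (Fin n) ℝ) (B D : Matrix (Fin n) (Fin m) ℝ)
    (F : Matrix (Fin m) (Fin n) ℝ) (Z : Matrix (Fin n) (Fin n) ℝ)
    (hZ : Zᵀ = Z)
    (S : Matrix (Fin n ⊕ Fin m) (Fin n ⊕ Fin m) ℝ) (hSsym : Sᵀ = S)
    (hEq : S = (fromBlocks A B (F * A) (F * B)) * S * (fromBlocks A B (F * A) (F * B))ᵀ
        + (fromBlocks C D (F * C) (F * D)) * S * (fromBlocks C D (F * C) (F * D))ᵀ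
        + (fromRows 1 F) * Z * (fromRows 1 F)ᵀ) :
    S = (fromRows 1 F) * S.toBlocks₁₁ * (fromRows 1 F)ᵀ := by
  set L : Matrix (Fin n ⊕ Fin m) (Fin n) ℝ := fromRows 1 F with hL
  have hAB : fromBlocks A B (F * A) (F * B) = L * fromCols A B := by
    rw [hL, fromRows_mul_fromCols]; simp
  have hCD : fromBlocks C D (F * C) (F * D) = L * fromCols C D := by
    rw [hL, fromRows_mul_fromCols]; simp
  have hM : S = L * (fromCols A B * S * (fromCols A B)ᵀ
      + fromCols C D * S * (fromCols C D)ᵀ + Z) * Lᵀ := by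
    conv_lhs => rw [hEq, hAB, hCD]
    simp only [transpose_mul, Matrix.mul_add, Matrix.add_mul, Matrix.mul_assoc]

  have h11 : S.toBlocks₁₁ = fromCols A B * S * (fromCols A B)ᵀ
      + fromCols C D * S * (fromCols C D)ᵀ + Z := by
    conv_lhs => rw [hM, hL]
    rw [key_fact]
  rw [h11, ← hM]
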